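/- Let ι be a finite nonempty type, let J : (ι → ℝ) → ℝ be differentiable at S*, let κ ≥ 0, and for each r ∈ ι let μ_r be a probability measure on ℝ with CDF F_r(θ) := μ_r((−∞, θ]). Suppose S* : ι → ℝ satisfies the fixed-point equations S*_r = F_r(θ̄_r) with θ̄_r := −∂J/∂S_r(S*) − κ for all r. Then the threshold strategy profile σ_r(θ) := 1 if θ ≤ θ̄_r and 0 otherwise is a Nash equilibrium consistent with S*: (i) ∫ σ_r(θ) dμ_r(θ) = S*_r for every r, and (ii) for every route r, every inconvenience cost θ ∈ ℝ, and every deviation s ∈ {0,1}, the payoff satisfies (θ̄_r − θ)·s ≤ (θ̄_r − θ)·σ_r(θ), i.e., no infinitesimal driver can improve her payoff (v_r(S*) − κ − θ)·s by unilaterally changing her decision. -/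

import Mathlib

open MeasureTheory Set

/-- Lemma 2: if the aggregate capacities `S*` solve the fixed-point
equations `S*_r = F_r(θ̄_r)` with `θ̄_r = -∂J/∂S_r(S*) - κ`, then the threshold
strategy profile `σ_r(θ) = 1_{θ ≤ θ̄_r}` is a Nash equilibrium consistent with `S*`:
the strategies aggregate to `S*`, and no infinitesimal driver can improve her payoff
`(θ̄_r - θ)·s` by a unilateral deviation `s ∈ {0,1}`. -/
theorem commuter_threshold_is_nash_equilibrium
    {ι : Type*} [Fintype ι] [Nonempty ι] [DecidableEq ι]
    (J : (ι → ℝ) → ℝ) (Sstar : ι → ℝ)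
    (hJ : DifferentiableAt ℝ J Sstar)
    (κ : ℝ) (hκ : 0 ≤ κ)
    (μ : ι → Measure ℝ) (hprob : ∀ r, IsProbabilityMeasure (μ r))
    (F : ι → ℝ → ℝ)
    (hF : ∀ r θ, F r θ = ((μ r) (Iic θ)).toReal)
    (θbar : ι → ℝ)
    (hθbar : ∀ r, θbar r = -(fderiv ℝ J Sstar (Pi.single r 1)) - κ)
    (hfix : ∀ r, Sstar r = F r (θbar r))
    (σ : ι → ℝ → ℝ)
    (hσ : ∀ r θ, σ r θ = if θ ≤ θbar r then (1 : ℝ) else 0) :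
    (∀ r, ∫ θ, σ r θ ∂(μ r) = Sstar r) ∧
    (∀ r, ∀ θ : ℝ, ∀ s ∈ ({0, 1} : Set ℝ),
      (θbar r - θ) * s ≤ (θbar r - θ) * σ r θ) := by
  constructor
  · intro r
    have h1 : (fun θ => σ r θ) = (Iic (θbar r)).indicator (fun _ => (1 : ℝ)) := by
      funext θ
      rw [hσ]
      by_cases h : θ ≤ θbar r <;> simp [h, indicator, mem_Iic]
    rw [h1, hfix r, hF]
    rw [integral_indicator_const _ measurableSet_Iic]
    simp
    rfl
  · intro r θ s hs
    have hσθ := hσ r θ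
    rcases hs with h | h
    · subst h
      by_cases hle : θ ≤ θbar r
      · simp [hσθ, hle]
      · simp [hσθ, hle]
    · simp only [mem_singleton_iff] at h; subst h
      by_cases hle : θ ≤ θbar r
      · simp [hσθ, hle]
      · simp only [hσθ, if_neg hle, mul_zero, mul_one]
        nlinarith [le_of_not_ge hle]
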